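/- Let $M$ be an $R$-module and $T \subseteq Spec(M)$ nonempty with $Q = (\cap_{P \in T} P : M)M$. If submodules $N$ and $L$ of $M$ are adjacent in the Zariski topology-graph $G(\tau_T)$ (i.e., $N \neq L$, $V(N) \cup V(L) = T$, and $V(N), V(L) \neq T$), then $\sqrt{(N:M)M}/\cap_{P\in T}P$ and $\sqrt{(L:M)M}/\cap_{P\in T}P$ are adjacent vertices in the annihilating-submodule graph $AG(M/\cap_{P\in T}P)$. -/

import Mathlib

open Submodule

section Defs
variable (R : Type*) [CommRing R] {M : Type*} [AddCommGroup M] [Module R M]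

/-- `(N : M)`, the colon ideal of a submodule with the whole module. -/
def colonTop (N : Submodule R M) : Ideal R := N.colon ⊤

variable {R}

/-- A prime submodule. -/
def IsPrimeSubmodule (P : Submodule R M) : Prop :=
  P ≠ ⊤ ∧ ∀ (r : R) (m : M), r • m ∈ P → r ∈ colonTop R P ∨ m ∈ P

/-- The prime spectrum of a module, as a set of submodules. -/
def specSet (R : Type*) [CommRing R] (M : Type*) [AddCommGroup M] [Module R M] :
    Set (Submodule R M) := {P | IsPrimeSubmodule P}

/-- `V(N)`. -/
def Vset (N : Submodule R M) : Set (Submodule R M) :=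
  {P | IsPrimeSubmodule P ∧ colonTop R N ≤ colonTop R P}

/-- `V^*(N)`. -/
def VstarSet (N : Submodule R M) : Set (Submodule R M) :=
  {P | IsPrimeSubmodule P ∧ N ≤ P}

/-- The product `NK = (N:M)(K:M)M` of two submodules. -/
def prodSub (N K : Submodule R M) : Submodule R M :=
  (colonTop R N * colonTop R K) • (⊤ : Submodule R M)

/-- The prime radical of a submodule. -/
def radicalSub (N : Submodule R M) : Submodule R M :=
  sInf {P | IsPrimeSubmodule P ∧ N ≤ P}

/-- Adjacency in the Zariski topology-graph `G(τ_T)`. -/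
def ZAdj (T : Set (Submodule R M)) (N L : Submodule R M) : Prop :=
  N ≠ L ∧ N ≠ ⊤ ∧ L ≠ ⊤ ∧ Vset N ∪ Vset L = T ∧ Vset N ≠ T ∧ Vset L ≠ T

/-- Vertices of the Zariski topology-graph `G(τ_T)`. -/
def ZVertex (T : Set (Submodule R M)) (N : Submodule R M) : Prop :=
  ∃ K, ZAdj T N K

/-- The Zariski topology-graph `G(τ_T)` as a simple graph on its vertex set. -/
def ZGraph (T : Set (Submodule R M)) : SimpleGraph {N : Submodule R M // ZVertex T N} where
  Adj a b := ZAdj T a.1 b.1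
  symm := ⟨by
    rintro a b ⟨h1, h2, h3, h4, h5, h6⟩
    exact ⟨h1.symm, h3, h2, by rwa [Set.union_comm], h6, h5⟩⟩
  loopless := ⟨by rintro a ⟨h1, -⟩; exact h1 rfl⟩

end Defs
section Extra
variable {R : Type*} [CommRing R] {M : Type*} [AddCommGroup M] [Module R M]

/-- Prime submodule of a submodule `W`, internal version (i.e. a prime submodule of the
module `W`). -/
def IsPrimeIn (W P : Submodule R M) : Prop :=
  P < W ∧ ∀ (r : R) (m : M), m ∈ W → r • m ∈ P → (∀ x ∈ W, r • x ∈ P) ∨ m ∈ P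

/-- The prime radical of `N` computed inside the submodule `W`. -/
def radicalIn (W N : Submodule R M) : Submodule R M :=
  sInf {P | IsPrimeIn W P ∧ N ≤ P} ⊓ W

/-- Vertices of the graph `AG(M)^*`. -/
def AGstarVertex (N : Submodule R M) : Prop :=
  N ≠ ⊤ ∧ colonTop R N ≠ Module.annihilator R M ∧
    ∃ K, K ≠ ⊤ ∧ colonTop R K ≠ Module.annihilator R M ∧ prodSub N K = ⊥

/-- Adjacency in the graph `AG(M)^*`. -/
def AGstarAdj (N L : Submodule R M) : Prop :=
  N ≠ L ∧ AGstarVertex N ∧ AGstarVertex L ∧ prodSub N L = ⊥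

/-- The clique number of a graph, valued in `ℕ∞`. -/
noncomputable def cliqueNumE {V : Type*} (G : SimpleGraph V) : ℕ∞ :=
  ⨆ n ∈ {n : ℕ | ∃ s, G.IsNClique n s}, (n : ℕ∞)

end Extra
section Aux
variable {R : Type*} [CommRing R] {M : Type*} [AddCommGroup M] [Module R M]

lemma colonTop_smul_le (N : Submodule R M) : colonTop R N • (⊤ : Submodule R M) ≤ N := by
  rw [Submodule.smul_le]
  intro r hr m _
  exact Submodule.mem_colon.mp hr m trivial

lemma smul_top_le_iff {N P : Submodule R M} :
    colonTop R N • (⊤ : Submodule R M) ≤ P ↔ colonTop R N ≤ colonTop R P := by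
  constructor
  · intro h r hr
    exact Submodule.mem_colon.mpr fun m _ => h (Submodule.smul_mem_smul hr trivial)
  · intro h
    exact le_trans (Submodule.smul_mono_left h) (colonTop_smul_le P)

lemma rad_eq (N : Submodule R M) :
    radicalSub (colonTop R N • (⊤ : Submodule R M)) = sInf (Vset N) := by
  unfold radicalSub Vset
  congr 1
  ext P
  simp only [Set.mem_setOf_eq]
  exact and_congr_right fun _ => smul_top_le_iff

lemma le_radicalSub (X : Submodule R M) : X ≤ radicalSub X :=
  le_sInf fun _ hP => hP.2

lemma prodSub_le_inf (X Y : Submodule R M) : prodSub X Y ≤ X ⊓ Y := by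
  unfold prodSub
  refine le_inf ?_ ?_
  · exact le_trans (Submodule.smul_mono_left Ideal.mul_le_left) (colonTop_smul_le X)
  · exact le_trans (Submodule.smul_mono_left Ideal.mul_le_right) (colonTop_smul_le Y)

end Aux

/-- if `N, L` are adjacent in `G(τ_T)`, then the images of
`√((N:M)M)` and `√((L:M)M)` in `M/∩_{P∈T}P` are adjacent vertices of the
annihilating-submodule graph `AG(M/∩_{P∈T}P)` (they are distinct, nonzero, and
their product is zero). -/
theorem stmt7 {R : Type*} [CommRing R] {M : Type*} [AddCommGroup M] [Module R M]
    (T : Set (Submodule R M)) (hT : T.Nonempty) (hTs : T ⊆ specSet R M)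
    (J : Submodule R M) (hJ : J = sInf T)
    (N L : Submodule R M) (h : ZAdj T N L) :
    Submodule.map J.mkQ (radicalSub (colonTop R N • (⊤ : Submodule R M))) ≠
        Submodule.map J.mkQ (radicalSub (colonTop R L • (⊤ : Submodule R M))) ∧
      Submodule.map J.mkQ (radicalSub (colonTop R N • (⊤ : Submodule R M))) ≠ ⊥ ∧
      Submodule.map J.mkQ (radicalSub (colonTop R L • (⊤ : Submodule R M))) ≠ ⊥ ∧
      prodSub (Submodule.map J.mkQ (radicalSub (colonTop R N • (⊤ : Submodule R M))))
        (Submodule.map J.mkQ (radicalSub (colonTop R L • (⊤ : Submodule R M)))) = ⊥ := by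
  obtain ⟨hNL, hNt, hLt, hunion, hVN, hVL⟩ := h
  set A := radicalSub (colonTop R N • (⊤ : Submodule R M)) with hA
  set B := radicalSub (colonTop R L • (⊤ : Submodule R M)) with hB
  have hVNsub : Vset N ⊆ T := hunion ▸ Set.subset_union_left
  have hVLsub : Vset L ⊆ T := hunion ▸ Set.subset_union_right
  have hJA : J ≤ A := by rw [hA, rad_eq, hJ]; exact sInf_le_sInf hVNsub
  have hJB : J ≤ B := by rw [hB, rad_eq, hJ]; exact sInf_le_sInf hVLsub
  obtain ⟨Q, hQT, hQN⟩ : ∃ Q ∈ T, Q ∉ Vset N := by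
    by_contra hc; push_neg at hc
    exact hVN (hVNsub.antisymm hc)
  obtain ⟨Q', hQT', hQL'⟩ : ∃ Q ∈ T, Q ∉ Vset L := by
    by_contra hc; push_neg at hc
    exact hVL (hVLsub.antisymm hc)
  have hAQ : ¬ A ≤ Q := fun hle =>
    hQN ⟨hTs hQT, smul_top_le_iff.mp ((le_radicalSub _).trans hle)⟩
  have hBQ' : ¬ B ≤ Q' := fun hle =>
    hQL' ⟨hTs hQT', smul_top_le_iff.mp ((le_radicalSub _).trans hle)⟩
  have hJQ : J ≤ Q := hJ ▸ sInf_le hQT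
  have hJQ' : J ≤ Q' := hJ ▸ sInf_le hQT'
  have hQinL : Q ∈ Vset L := by
    have : Q ∈ Vset N ∪ Vset L := hunion ▸ hQT
    exact this.resolve_left hQN
  have hBQ : B ≤ Q := by rw [hB, rad_eq]; exact sInf_le hQinL
  have hABJ : A ⊓ B = J := by
    rw [hA, hB, rad_eq, rad_eq, ← sInf_union, hunion, hJ]
  refine ⟨?_, ?_, ?_, ?_⟩
  · intro heq
    have hAB : A = B := by
      have h2 := congrArg (Submodule.comap J.mkQ) heq
      rwa [Submodule.comap_map_eq, Submodule.comap_map_eq, Submodule.ker_mkQ,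
        sup_eq_left.mpr hJA, sup_eq_left.mpr hJB] at h2
    exact hAQ (hAB ▸ hBQ)
  · intro hbot
    refine hAQ (fun x hx => ?_)
    have hx0 : J.mkQ x ∈ Submodule.map J.mkQ A := Submodule.mem_map_of_mem hx
    rw [hbot, Submodule.mem_bot] at hx0
    exact hJQ ((Submodule.Quotient.mk_eq_zero J).mp hx0)
  · intro hbot
    refine hBQ' (fun x hx => ?_)
    have hx0 : J.mkQ x ∈ Submodule.map J.mkQ B := Submodule.mem_map_of_mem hx
    rw [hbot, Submodule.mem_bot] at hx0
    exact hJQ' ((Submodule.Quotient.mk_eq_zero J).mp hx0)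
  · refine le_bot_iff.mp (le_trans (prodSub_le_inf _ _) ?_)
    rintro x ⟨hxA, hxB⟩
    obtain ⟨a, ha, rfl⟩ := hxA
    obtain ⟨b, hb, hba⟩ := hxB
    have hab : a - b ∈ J := by
      rw [← Submodule.Quotient.mk_eq_zero J, ← Submodule.mkQ_apply, map_sub, hba, sub_self]
    have haB : a ∈ B := by
      have := B.add_mem (hJB hab) hb
      simpa using this
    have : a ∈ J := hABJ ▸ ⟨ha, haB⟩
    simpa [Submodule.mem_bot, Submodule.Quotient.mk_eq_zero] using this
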